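/- Let q : ℤ^m → ℚ be a quasipolynomial, and fix integers a_1, …, a_m, c_0, …, c_m, and d ≠ 0. Then the function Q_1 : ℤ^{m+1} → ℚ defined by Q_1(t_0, t_1, …, t_m) = Σ_{k=1}^{⌊(c_0 t_0 + ⋯ + c_m t_m − 1)/d⌋} q(t_1 + a_1 k, …, t_m + a_m k), where the sum is taken with the signed convention, is a quasipolynomial on ℤ^{m+1}. -/

import Mathlib

/-- A function `Q : ℤ^d → ℚ` is a quasipolynomial if there are a positive integer `p`
and polynomials `q_r ∈ ℚ[x₁,…,x_d]`, indexed by residue vectors `r ∈ (ℤ/p)^d`, with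
`Q t = q_{t mod p}(t)` for all `t ∈ ℤ^d`. -/
def IsQuasiPolynomial {d : ℕ} (Q : (Fin d → ℤ) → ℚ) : Prop :=
  ∃ p : ℕ, 0 < p ∧ ∃ q : (Fin d → ZMod p) → MvPolynomial (Fin d) ℚ,
    ∀ t : Fin d → ℤ, Q t = MvPolynomial.eval (fun i => (t i : ℚ)) (q fun i => (t i : ZMod p))

/-- The signed convention for a finite sum `∑_{k=a}^{b} f(k)` over integers: the ordinary
sum if `a ≤ b`, the value `0` if `a = b + 1`, and `-∑_{k=b+1}^{a-1} f(k)` if `a ≥ b + 2`. -/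
noncomputable def signedSum (a b : ℤ) (f : ℤ → ℚ) : ℚ :=
  if a ≤ b then ∑ k ∈ Finset.Icc a b, f k else -∑ k ∈ Finset.Icc (b + 1) (a - 1), f k

open Polynomial in
private lemma exists_psi {R : Type} [CommRing R] [Algebra ℚ R] (c : ℕ) (hc : 0 < c)
    (f : R[X]) : ∃ Ψ : R[X], Ψ - Ψ.comp (X - C (c : R)) = f := by
  set M : R[X] → Prop := fun g => ∃ Ψ : R[X], Ψ - Ψ.comp (X - C (c : R)) = g with hM
  suffices h : M f by exact h
  have Mzero : M 0 := ⟨0, by simp⟩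
  have Madd : ∀ {g h}, M g → M h → M (g + h) := by
    rintro g h ⟨Ψ₁, h₁⟩ ⟨Ψ₂, h₂⟩
    exact ⟨Ψ₁ + Ψ₂, by rw [add_comp]; rw [← h₁, ← h₂]; ring⟩
  have Mmul : ∀ (s : R) {g}, M g → M (C s * g) := by
    rintro s g ⟨Ψ, hΨ⟩
    exact ⟨C s * Ψ, by rw [mul_comp, C_comp, ← mul_sub, hΨ]⟩
  have Msum : ∀ {ι : Type} (t : Finset ι) (F : ι → R[X]), (∀ i ∈ t, M (F i)) →
      M (∑ i ∈ t, F i) := by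
    intro ι t F h
    classical
    induction t using Finset.induction_on with
    | empty => simpa using Mzero
    | insert _ _ hnot ih =>
      rw [Finset.sum_insert hnot]
      exact Madd (h _ (Finset.mem_insert_self _ _))
        (ih fun i hi => h i (Finset.mem_insert_of_mem hi))
  have Mpow : ∀ n : ℕ, M (X ^ n) := by
    intro n
    induction n using Nat.strong_induction_on with
    | _ n IH =>
      have hD : M (X ^ (n + 1) - (X - C (c : R)) ^ (n + 1)) :=
        ⟨X ^ (n + 1), by simp [pow_comp]⟩
      have expand : (X - C (c : R)) ^ (n + 1) =
          ∑ k ∈ Finset.range (n + 2), X ^ k * (-C (c : R)) ^ (n + 1 - k) *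
            ((n + 1).choose k : R[X]) := by
        rw [sub_eq_add_neg, add_pow]
      have key : C (((n : R) + 1) * (c : R)) * X ^ n =
          (X ^ (n + 1) - (X - C (c : R)) ^ (n + 1)) +
          ∑ k ∈ Finset.range n, X ^ k * (-C (c : R)) ^ (n + 1 - k) *
            ((n + 1).choose k : R[X]) := by
        rw [expand, Finset.sum_range_succ, Finset.sum_range_succ]
        simp [Nat.choose_succ_self_right, Nat.sub_self, Nat.choose_self]
        ring
      have hmem : M (C (((n : R) + 1) * (c : R)) * X ^ n) := by
        rw [key]
        exact Madd hD (Msum _ _ fun i hi => by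
          have : X ^ i * (-C (c : R)) ^ (n + 1 - i) * ((n + 1).choose i : R[X]) =
              C ((-(c : R)) ^ (n + 1 - i) * ((n + 1).choose i : R)) * X ^ i := by
            simp only [map_mul, map_pow, map_neg, Polynomial.C_eq_natCast]
            ring
          rw [this]
          exact Mmul _ (IH i (Finset.mem_range.mp hi)))
      obtain ⟨Ψ, hΨ⟩ := hmem
      refine ⟨C (algebraMap ℚ R ((((n : ℚ) + 1) * (c : ℚ))⁻¹)) * Ψ, ?_⟩
      rw [mul_comp, C_comp, ← mul_sub, hΨ, ← mul_assoc, ← map_mul]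
      have hc' : (((n : ℚ) + 1) * (c : ℚ)) ≠ 0 := by positivity
      have h2 : ((n : R) + 1) * (c : R) = algebraMap ℚ R (((n : ℚ) + 1) * (c : ℚ)) := by
        rw [map_mul, map_add, map_one, map_natCast, map_natCast]
      have h3 : algebraMap ℚ R ((((n : ℚ) + 1) * (c : ℚ))⁻¹) * (((n : R) + 1) * (c : R)) = 1 := by
        rw [h2, ← map_mul, inv_mul_cancel₀ hc', map_one]
      rw [h3, map_one, one_mul]
  induction f using Polynomial.induction_on' with
  | add p q hp hq => exact Madd hp hq
  | monomial n s =>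
    rw [← Polynomial.C_mul_X_pow_eq_monomial]
    exact Mmul _ (Mpow n)

private lemma eq_of_diff (F G : ℤ → ℚ) (h0 : F 0 = G 0)
    (h : ∀ N : ℤ, F N - F (N - 1) = G N - G (N - 1)) : ∀ N, F N = G N := by
  intro N
  induction N using Int.induction_on with
  | zero => exact h0
  | succ n ih =>
    have := h (n + 1)
    have e : ((n : ℤ) + 1) - 1 = n := by ring
    rw [e] at this
    linarith
  | pred n ih =>
    have := h (-n)
    linarith

private lemma signedSum_step (f : ℤ → ℚ) (N : ℤ) :
    signedSum 1 N f - signedSum 1 (N - 1) f = f N := by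
  unfold signedSum
  rw [show (1 : ℤ) - 1 = 0 by ring]
  by_cases h1 : (1 : ℤ) ≤ N
  · rw [if_pos h1]
    by_cases h2 : (1 : ℤ) ≤ N - 1
    · rw [if_pos h2]
      have hins : Finset.Icc (1 : ℤ) N = insert N (Finset.Icc 1 (N - 1)) := by
        ext x
        simp only [Finset.mem_Icc, Finset.mem_insert]
        omega
      rw [hins, Finset.sum_insert (by simp)]
      ring
    · have hN : N = 1 := by omega
      subst hN
      norm_num
  · rw [if_neg h1, if_neg (by omega)]
    have hins : Finset.Icc N (0 : ℤ) = insert N (Finset.Icc (N + 1) 0) := by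
      ext x
      simp only [Finset.mem_Icc, Finset.mem_insert]
      omega
    rw [show N - 1 + 1 = N by ring, hins, Finset.sum_insert (by simp)]
    ring

private lemma zmod_val_pred {p : ℕ} [NeZero p] {z : ZMod p} (hz : z ≠ 0) :
    (z - 1).val + 1 = z.val := by
  have h1 : 1 ≤ z.val := Nat.pos_of_ne_zero (fun h => hz ((ZMod.val_eq_zero z).1 h))
  have hlt : z.val - 1 < p := lt_of_le_of_lt (Nat.sub_le _ _) (ZMod.val_lt z)
  have hcast : z - 1 = ((z.val - 1 : ℕ) : ZMod p) := by
    have hz' : ((z.val : ℕ) : ZMod p) = z := ZMod.natCast_rightInverse z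
    rw [Nat.cast_sub h1, hz', Nat.cast_one]
  rw [hcast, ZMod.val_cast_of_lt hlt]
  omega

private lemma zmod_val_neg_one {p : ℕ} (hp : 0 < p) :
    ((-1 : ZMod p).val : ℤ) = (p : ℤ) - 1 := by
  obtain ⟨p', rfl⟩ : ∃ p', p = p' + 1 := ⟨p - 1, by omega⟩
  rw [ZMod.val_neg_one]
  push_cast
  ring

open Polynomial in
private lemma step1 (m p : ℕ) (hp : 0 < p)
    (qq : (Fin m → ZMod p) → MvPolynomial (Fin m) ℚ)
    (q : (Fin m → ℤ) → ℚ)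
    (hq : ∀ t, q t = MvPolynomial.eval (fun i => (t i : ℚ)) (qq fun i => (t i : ZMod p)))
    (a : Fin m → ℤ) (ρ : Fin m → ZMod p) :
    ∃ H : ZMod p → Polynomial (MvPolynomial (Fin m) ℚ),
      ∀ (u : Fin m → ℤ), (∀ i, ((u i : ℤ) : ZMod p) = ρ i) → ∀ N : ℤ,
        signedSum 1 N (fun k => q fun i => u i + a i * k)
          = Polynomial.eval₂ (MvPolynomial.eval (fun i => (u i : ℚ))) (N : ℚ)
              (H ((N : ZMod p))) := by
  haveI : NeZero p := ⟨hp.ne'⟩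
  classical
  let φ : Fin m → (MvPolynomial (Fin m) ℚ)[X] := fun i =>
    C (MvPolynomial.X i) + C (MvPolynomial.C ((a i : ℚ))) * X
  let f : ZMod p → (MvPolynomial (Fin m) ℚ)[X] := fun r =>
    MvPolynomial.aeval φ (qq (fun i => ρ i + ((a i : ℤ) : ZMod p) * r))
  have hΨex : ∀ r, ∃ Ψ : (MvPolynomial (Fin m) ℚ)[X],
      Ψ - Ψ.comp (X - C ((p : ℕ) : MvPolynomial (Fin m) ℚ)) = f r :=
    fun r => exists_psi p hp (f r)
  choose Ψ hΨ using hΨex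
  let δ : ZMod p → ZMod p → ℕ := fun s r => (s - r).val
  have hδ : ∀ s r, δ s r = (s - r).val := fun _ _ => rfl
  let κ : ZMod p → MvPolynomial (Fin m) ℚ :=
    fun r => (Ψ r).eval (((-(δ 0 r : ℤ)) : ℤ) : MvPolynomial (Fin m) ℚ)
  let H : ZMod p → (MvPolynomial (Fin m) ℚ)[X] := fun s =>
    ∑ r : ZMod p, ((Ψ r).comp (X - C ((δ s r : ℤ) : MvPolynomial (Fin m) ℚ)) - C (κ r))
  refine ⟨H, ?_⟩
  intro u hu
  set ε : MvPolynomial (Fin m) ℚ →+* ℚ := (MvPolynomial.eval (fun i => (u i : ℚ)) :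
    MvPolynomial (Fin m) ℚ →+* ℚ) with hε
  let G : ZMod p → ℚ → ℚ := fun r y => Polynomial.eval₂ ε y (Ψ r)
  have hG : ∀ r y, G r y = Polynomial.eval₂ ε y (Ψ r) := fun _ _ => rfl
  -- evaluation of H
  have hHeval : ∀ (s : ZMod p) (y : ℚ), Polynomial.eval₂ ε y (H s) =
      ∑ r : ZMod p, (G r (y - ((δ s r : ℕ) : ℚ)) - G r (-((δ 0 r : ℕ) : ℚ))) := by
    intro s y
    show Polynomial.eval₂ ε y (∑ r : ZMod p,
      ((Ψ r).comp (X - C ((δ s r : ℤ) : MvPolynomial (Fin m) ℚ)) - C (κ r))) = _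
    rw [Polynomial.eval₂_finset_sum]
    refine Finset.sum_congr rfl fun r _ => ?_
    rw [Polynomial.eval₂_sub, Polynomial.eval₂_comp, Polynomial.eval₂_sub,
      Polynomial.eval₂_X, Polynomial.eval₂_C, Polynomial.eval₂_C]
    have h1 : ε (((δ s r : ℤ) : MvPolynomial (Fin m) ℚ)) = ((δ s r : ℕ) : ℚ) := by
      rw [map_intCast]; push_cast; ring
    have h3 : ε ((((-(δ 0 r : ℤ)) : ℤ) : MvPolynomial (Fin m) ℚ)) = -((δ 0 r : ℕ) : ℚ) := by
      rw [map_intCast]; push_cast; ring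
    have h2 : ε (κ r) = G r (-((δ 0 r : ℕ) : ℚ)) := by
      rw [hG, ← h3]
      exact (Polynomial.eval₂_at_apply ε _).symm
    rw [h1, h2, hG]
  have hGstep : ∀ (r : ZMod p) (y : ℚ), G r y - G r (y - (p : ℚ)) =
      Polynomial.eval₂ ε y (f r) := by
    intro r y
    have h := congrArg (Polynomial.eval₂ ε y) (hΨ r)
    rw [Polynomial.eval₂_sub, Polynomial.eval₂_comp, Polynomial.eval₂_sub,
      Polynomial.eval₂_X, Polynomial.eval₂_C, map_natCast] at h
    rw [hG, hG]
    exact h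
  have hfeval : ∀ (r : ZMod p) (k : ℤ), ((k : ℤ) : ZMod p) = r →
      Polynomial.eval₂ ε (k : ℚ) (f r) = q (fun i => u i + a i * k) := by
    intro r k hk
    have hidx : (fun i => ((u i + a i * k : ℤ) : ZMod p)) =
        fun i => ρ i + ((a i : ℤ) : ZMod p) * r := by
      funext i
      push_cast
      rw [hu i, hk]
    have hhom : (Polynomial.eval₂RingHom ε ((k : ℚ))).comp (MvPolynomial.aeval φ).toRingHom
        = (MvPolynomial.eval (fun i => ((u i : ℚ) + (a i : ℚ) * (k : ℚ))) :
            MvPolynomial (Fin m) ℚ →+* ℚ) := by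
      apply MvPolynomial.ringHom_ext
      · intro r'
        rw [RingHom.comp_apply]
        simp only [AlgHom.toRingHom_eq_coe, RingHom.coe_coe]
        rw [MvPolynomial.aeval_C, Polynomial.algebraMap_apply, MvPolynomial.algebraMap_eq,
          Polynomial.coe_eval₂RingHom]
        rw [Polynomial.eval₂_C, hε, MvPolynomial.eval_C, MvPolynomial.eval_C]
      · intro i
        rw [RingHom.comp_apply]
        simp only [AlgHom.toRingHom_eq_coe, RingHom.coe_coe]
        rw [MvPolynomial.aeval_X]
        show Polynomial.eval₂ ε ((k : ℚ))
          (C (MvPolynomial.X i) + C (MvPolynomial.C ((a i : ℚ))) * X) = _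
        rw [Polynomial.eval₂_add, Polynomial.eval₂_mul, Polynomial.eval₂_C,
          Polynomial.eval₂_C, Polynomial.eval₂_X, hε, MvPolynomial.eval_X,
          MvPolynomial.eval_C, MvPolynomial.eval_X]
    have happ := RingHom.congr_fun hhom (qq fun i => ρ i + ((a i : ℤ) : ZMod p) * r)
    rw [hq, hidx]
    have hpts : (fun i => ((u i + a i * k : ℤ) : ℚ)) =
        fun i => ((u i : ℚ) + (a i : ℚ) * (k : ℚ)) := by
      funext i; push_cast; ring
    rw [hpts]
    exact happ
  refine eq_of_diff _ _ ?_ ?_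
  · -- base case N = 0
    have h0 : signedSum 1 0 (fun k => q fun i => u i + a i * k) = 0 := by
      rw [signedSum]
      norm_num
    rw [h0]
    rw [show (((0 : ℤ)) : ℚ) = (0 : ℚ) by norm_num,
      show (((0 : ℤ)) : ZMod p) = (0 : ZMod p) by norm_num, hHeval]
    symm
    apply Finset.sum_eq_zero
    intro r _
    rw [zero_sub]
    exact sub_self _
  · -- step
    intro N
    rw [signedSum_step]
    have hc1 : (((N - 1 : ℤ)) : ℚ) = (N : ℚ) - 1 := by push_cast; ring
    have hc2 : (((N - 1 : ℤ)) : ZMod p) = ((N : ZMod p)) - 1 := by push_cast; ring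
    rw [hc1, hc2, hHeval, hHeval, ← Finset.sum_sub_distrib]
    symm
    have e1 : ∀ r : ZMod p,
        (G r ((N : ℚ) - ((δ ((N : ZMod p)) r : ℕ) : ℚ)) - G r (-((δ 0 r : ℕ) : ℚ))) -
        (G r (((N : ℚ) - 1) - ((δ ((N : ZMod p) - 1) r : ℕ) : ℚ)) - G r (-((δ 0 r : ℕ) : ℚ)))
        = G r ((N : ℚ) - ((δ ((N : ZMod p)) r : ℕ) : ℚ)) -
          G r (((N : ℚ) - 1) - ((δ ((N : ZMod p) - 1) r : ℕ) : ℚ)) := fun r => by ring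
    rw [Finset.sum_congr rfl (fun r _ => e1 r)]
    rw [Finset.sum_eq_single ((N : ZMod p))]
    · -- the main term
      have hd1 : δ ((N : ZMod p)) ((N : ZMod p)) = 0 := by
        rw [hδ, sub_self, ZMod.val_zero]
      have hd2 : ((δ ((N : ZMod p) - 1) ((N : ZMod p)) : ℕ) : ℚ) = (p : ℚ) - 1 := by
        rw [hδ, show ((N : ZMod p) - 1 - (N : ZMod p)) = (-1 : ZMod p) by ring]
        have := zmod_val_neg_one hp
        push_cast at this ⊢
        exact_mod_cast this
      rw [hd1, hd2]
      rw [show (N : ℚ) - ((0 : ℕ) : ℚ) = (N : ℚ) by push_cast; ring,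
        show ((N : ℚ) - 1) - ((p : ℚ) - 1) = (N : ℚ) - (p : ℚ) by ring]
      rw [hGstep]
      exact hfeval _ N rfl
    · -- vanishing terms
      intro b _ hb
      have hz : ((N : ZMod p)) - b ≠ 0 := sub_ne_zero_of_ne (Ne.symm hb)
      have hv := zmod_val_pred hz
      have hd3 : δ ((N : ZMod p) - 1) b = (((N : ZMod p)) - b - 1).val := by
        rw [hδ]
        congr 1
        ring
      have harg : ((N : ℚ) - 1) - ((δ ((N : ZMod p) - 1) b : ℕ) : ℚ) =
          (N : ℚ) - ((δ ((N : ZMod p)) b : ℕ) : ℚ) := by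
        rw [hd3, hδ]
        have := congrArg (fun n : ℕ => (n : ℚ)) hv
        push_cast at this
        linarith
      rw [harg]
      exact sub_self _
    · intro h
      exact absurd (Finset.mem_univ _) h

/-- **Lemma on quasipolynomials, first sum.**  If `q : ℤ^m → ℚ` is a quasipolynomial and
`a₁,…,a_m, c₀,…,c_m, d` are integers with `d ≠ 0`, then
`Q₁(t₀,…,t_m) = ∑_{k=1}^{⌊(c₀t₀+⋯+c_mt_m-1)/d⌋} q(t₁+a₁k, …, t_m+a_mk)`
(signed-sum convention) is a quasipolynomial on `ℤ^{m+1}`. -/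
theorem quasipolynomial_signed_sum_one
    (m : ℕ) (q : (Fin m → ℤ) → ℚ) (hq : IsQuasiPolynomial q)
    (a : Fin m → ℤ) (c : Fin (m + 1) → ℤ) (d : ℤ) (hd : d ≠ 0) :
    IsQuasiPolynomial (fun t : Fin (m + 1) → ℤ =>
      signedSum 1 ⌊((∑ i, c i * t i : ℤ) - 1 : ℚ) / (d : ℚ)⌋
        (fun k => q fun i => t i.succ + a i * k)) := by
  classical
  obtain ⟨p, hp, qq, hqq⟩ := hq
  choose Hf hHf using fun ρ => step1 m p hp qq q hqq a ρ
  set P : ℕ := p * d.natAbs with hPdef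
  have hP : 0 < P := Nat.mul_pos hp (Int.natAbs_pos.mpr hd)
  haveI : NeZero P := ⟨hP.ne'⟩
  have hdq : (d : ℚ) ≠ 0 := Int.cast_ne_zero.mpr hd
  -- data extracted from a residue vector
  let tstar : (Fin (m + 1) → ZMod P) → Fin (m + 1) → ℤ := fun r i => ((r i).val : ℤ)
  let Lstar : (Fin (m + 1) → ZMod P) → ℤ := fun r => ∑ i, c i * tstar r i
  let Nstar : (Fin (m + 1) → ZMod P) → ℤ := fun r => ⌊((Lstar r : ℚ) - 1) / (d : ℚ)⌋
  let rho : (Fin (m + 1) → ZMod P) → Fin m → ZMod p :=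
    fun r i => ((tstar r i.succ : ℤ) : ZMod p)
  let sres : (Fin (m + 1) → ZMod P) → ZMod p := fun r => ((Nstar r : ℤ) : ZMod p)
  let Xval : (Fin (m + 1) → ZMod P) → MvPolynomial (Fin (m + 1)) ℚ := fun r =>
    MvPolynomial.C ((Nstar r : ℚ) - (Lstar r : ℚ) / (d : ℚ)) +
      ∑ i, MvPolynomial.C ((c i : ℚ) / (d : ℚ)) * MvPolynomial.X i
  let q1 : (Fin (m + 1) → ZMod P) → MvPolynomial (Fin (m + 1)) ℚ := fun r =>
    Polynomial.eval₂
      ((MvPolynomial.rename (Fin.succ : Fin m → Fin (m + 1))).toRingHom :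
        MvPolynomial (Fin m) ℚ →+* MvPolynomial (Fin (m + 1)) ℚ)
      (Xval r) (Hf (rho r) (sres r))
  refine ⟨P, hP, q1, ?_⟩
  intro t
  set rr : Fin (m + 1) → ZMod P := fun i => ((t i : ℤ) : ZMod P) with hrr
  set L : ℤ := ∑ i, c i * t i with hL
  -- congruences
  have hts : ∀ i, ((tstar rr i : ℤ) : ZMod P) = rr i := by
    intro i
    show (((((rr i).val : ℕ) : ℤ)) : ZMod P) = rr i
    rw [Int.cast_natCast]
    exact ZMod.natCast_rightInverse (rr i)
  have hdvd : ∀ i, (P : ℤ) ∣ (t i - tstar rr i) := by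
    intro i
    rw [← ZMod.intCast_zmod_eq_zero_iff_dvd]
    push_cast
    rw [hts i]
    show rr i - rr i = 0
    ring
  have hLd : (P : ℤ) ∣ (L - Lstar rr) := by
    have h1 : L - Lstar rr = ∑ i, c i * (t i - tstar rr i) := by
      rw [hL]
      show _ = ∑ i, c i * (t i - tstar rr i)
      rw [← Finset.sum_sub_distrib]
      exact Finset.sum_congr rfl fun i _ => by ring
    rw [h1]
    exact Finset.dvd_sum fun i _ => Dvd.dvd.mul_left (hdvd i) _
  obtain ⟨w, hw⟩ := hLd
  set E : ℤ := d.sign * p with hE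
  have hPE : (P : ℤ) = d * E := by
    rw [hE, hPdef]
    push_cast
    rw [← mul_assoc, Int.mul_sign_self, Int.abs_eq_natAbs]
    ring
  have hpE : (p : ℤ) ∣ E := Dvd.intro_left _ rfl
  have hLw : (L : ℚ) = (Lstar rr : ℚ) + (d : ℚ) * (E : ℚ) * (w : ℚ) := by
    have h2 : L = Lstar rr + (P : ℤ) * w := by linarith [hw]
    rw [hPE] at h2
    exact_mod_cast congrArg (fun z : ℤ => (z : ℚ)) h2
  have hNshift : ⌊((L : ℚ) - 1) / (d : ℚ)⌋ = Nstar rr + E * w := by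
    have h3 : ((L : ℚ) - 1) / (d : ℚ) = ((Lstar rr : ℚ) - 1) / (d : ℚ) + ((E * w : ℤ) : ℚ) := by
      rw [hLw]
      push_cast
      field_simp
      ring
    rw [h3, Int.floor_add_intCast]
  have hsNt : ((⌊((L : ℚ) - 1) / (d : ℚ)⌋ : ℤ) : ZMod p) = sres rr := by
    rw [hNshift]
    have h0 : ((E * w : ℤ) : ZMod p) = 0 :=
      (ZMod.intCast_zmod_eq_zero_iff_dvd _ p).mpr (hpE.mul_right w)
    push_cast
    push_cast at h0
    rw [show ((E : ZMod p)) * (w : ZMod p) = 0 from h0]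
    show sres rr + 0 = sres rr
    ring
  have hurho : ∀ i, ((t i.succ : ℤ) : ZMod p) = rho rr i := by
    intro i
    have hpP : (p : ℤ) ∣ (P : ℤ) := by
      rw [hPdef]; push_cast; exact Dvd.intro _ rfl
    have h4 : (p : ℤ) ∣ (t i.succ - tstar rr i.succ) := dvd_trans hpP (hdvd i.succ)
    have h5 := (ZMod.intCast_zmod_eq_zero_iff_dvd _ p).mpr h4
    push_cast at h5
    have := sub_eq_zero.mp h5
    exact this
  -- evaluation of q1
  set ψ : MvPolynomial (Fin (m + 1)) ℚ →+* ℚ :=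
    (MvPolynomial.eval (fun i => (t i : ℚ)) : MvPolynomial (Fin (m + 1)) ℚ →+* ℚ) with hψ
  have hrename : ψ.comp ((MvPolynomial.rename (Fin.succ : Fin m → Fin (m + 1))).toRingHom) =
      (MvPolynomial.eval (fun i => (t i.succ : ℚ)) : MvPolynomial (Fin m) ℚ →+* ℚ) := by
    apply RingHom.ext
    intro x
    show ψ (MvPolynomial.rename Fin.succ x) = _
    rw [hψ]
    rw [MvPolynomial.eval_rename]
    rfl
  have hXval : ψ (Xval rr) = ((⌊((L : ℚ) - 1) / (d : ℚ)⌋ : ℤ) : ℚ) := by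
    show ψ (MvPolynomial.C ((Nstar rr : ℚ) - (Lstar rr : ℚ) / (d : ℚ)) +
      ∑ i, MvPolynomial.C ((c i : ℚ) / (d : ℚ)) * MvPolynomial.X i) = _
    rw [map_add, map_sum, hψ, MvPolynomial.eval_C]
    have h6 : ∀ i : Fin (m + 1), (MvPolynomial.eval (fun j => (t j : ℚ)))
        (MvPolynomial.C ((c i : ℚ) / (d : ℚ)) * MvPolynomial.X i) = (c i : ℚ) / (d : ℚ) * (t i : ℚ) := by
      intro i
      rw [map_mul, MvPolynomial.eval_C, MvPolynomial.eval_X]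
    rw [Finset.sum_congr rfl fun i _ => h6 i]
    have h7 : ∑ i, (c i : ℚ) / (d : ℚ) * (t i : ℚ) = (L : ℚ) / (d : ℚ) := by
      rw [hL]
      push_cast
      rw [Finset.sum_div]
      exact Finset.sum_congr rfl fun i _ => by ring
    rw [h7, hNshift]
    push_cast
    rw [hLw]
    field_simp
    ring
  have heval : MvPolynomial.eval (fun i => (t i : ℚ)) (q1 rr) =
      Polynomial.eval₂ (MvPolynomial.eval (fun i => (t i.succ : ℚ)))
        ((⌊((L : ℚ) - 1) / (d : ℚ)⌋ : ℤ) : ℚ) (Hf (rho rr) (sres rr)) := by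
    show ψ (Polynomial.eval₂ _ (Xval rr) (Hf (rho rr) (sres rr))) = _
    rw [Polynomial.hom_eval₂, hrename, hXval]
  have main := hHf (rho rr) (fun i => t i.succ) hurho ⌊((L : ℚ) - 1) / (d : ℚ)⌋
  rw [hsNt] at main
  exact main.trans heval.symm
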